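/- Let g be a compact simple Lie algebra, t a maximal abelian subalgebra, Π = {α_1,…,α_n} the fundamental roots, δ = Σ_j m_j α_j the highest root, and K_i ∈ t_C defined by α_j(K_i) = δ_{ji}. Suppose m_p = m_q = 1 and let σ := Ad(exp(π/2)√−1(2K_p + K_q)). Then g^σ = g^{Ad(exp(2π/3)√−1(K_p+K_q))}; consequently, since Ad(exp(2π/3)√−1(K_p+K_q)) has order 3, (g, g^σ) is a 3-symmetric pair. -/

import Mathlib

/-!
Common framework: we model the complexification `gC` of a compact Lie algebra `g` as a
complex Lie algebra, the compact real form `g` and the maximal abelian subalgebra `t`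
as real Lie subalgebras of `gC`, roots of `(gC, tC)` as complex-linear functionals on
`gC` (only their restriction to `tC`, the complex span of `t`, matters), and the
inner automorphisms `Ad(exp X) = exp (ad X)` through an abstract family `expAd`
characterized by its action on eigenvectors of `ad X` (which determines it on the
compact form, where every `ad X` is semisimple).
-/

open Complex

namespace Paper

variable (gC : Type) [LieRing gC] [LieAlgebra ℂ gC] [LieAlgebra ℝ gC]
  [IsScalarTower ℝ ℂ gC] [FiniteDimensional ℂ gC]

/-- Composition group structure on the Lie algebra automorphisms of `gC`. -/
noncomputable instance : Group (gC ≃ₗ⁅ℂ⁆ gC) where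
  mul f g := g.trans f
  one := LieEquiv.refl
  inv f := f.symm
  mul_assoc f g h := rfl
  one_mul f := rfl
  mul_one f := rfl
  inv_mul_cancel f := by
    ext x
    exact f.symm_apply_apply x

/-- The complex span `t_ℂ` of a real subalgebra `t` of `gC`. -/
def cspan (t : LieSubalgebra ℝ gC) : Submodule ℂ gC := Submodule.span ℂ (t : Set gC)

/-- The root space of the functional `a` with respect to `t_ℂ`. -/
def rootSpace (t : LieSubalgebra ℝ gC) (a : Module.Dual ℂ gC) : Set gC :=
  {X : gC | ∀ H ∈ cspan gC t, ⁅H, X⁆ = a H • X}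

/-- `a` is a root of `(gC, t_ℂ)`. -/
def IsRoot (t : LieSubalgebra ℝ gC) (a : Module.Dual ℂ gC) : Prop :=
  (∃ H ∈ cspan gC t, a H ≠ 0) ∧ ∃ X : gC, X ≠ 0 ∧ X ∈ rootSpace gC t a

/-- `g` is a compact real form of `gC`: `gC = g ⊕ √-1 g` and the Killing form of `g`
is negative definite. -/
structure IsCompactForm (g : LieSubalgebra ℝ gC) : Prop where
  spans : ∀ z : gC, ∃ x ∈ g, ∃ y ∈ g, z = x + Complex.I • y
  inj : ∀ x : gC, x ∈ g → Complex.I • x ∈ g → x = 0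
  negdef : ∀ x : ↥g, x ≠ 0 → killingForm ℝ ↥g x x < 0

/-- `t` is a maximal abelian subalgebra of `g`. -/
structure IsMaxAbelian (g t : LieSubalgebra ℝ gC) : Prop where
  le : t ≤ g
  abelian : ∀ x ∈ t, ∀ y ∈ t, ⁅x, y⁆ = (0 : gC)
  max : ∀ t' : LieSubalgebra ℝ gC, t' ≤ g →
    (∀ x ∈ t', ∀ y ∈ t', ⁅x, y⁆ = (0 : gC)) → t ≤ t' → t' = t

/-- `α 1, …, α n` is a system of fundamental (simple) roots of `Δ(gC, t_ℂ)` and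
`K 1, …, K n` is the dual basis of `t_ℂ`, i.e. `α i (K j) = δ_{ij}`. -/
structure IsSimpleSystem (t : LieSubalgebra ℝ gC) (n : ℕ) (α : ℕ → Module.Dual ℂ gC)
    (K : ℕ → gC) : Prop where
  isRoot : ∀ i ∈ Finset.Icc 1 n, IsRoot gC t (α i)
  decomp : ∀ b : Module.Dual ℂ gC, IsRoot gC t b →
    (∃ k : ℕ → ℕ, ∀ H ∈ cspan gC t, b H = ∑ j ∈ Finset.Icc 1 n, (k j : ℂ) * α j H) ∨
    (∃ k : ℕ → ℕ, ∀ H ∈ cspan gC t, b H = -∑ j ∈ Finset.Icc 1 n, (k j : ℂ) * α j H)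
  K_mem : ∀ j ∈ Finset.Icc 1 n, K j ∈ cspan gC t
  K_dual : ∀ i ∈ Finset.Icc 1 n, ∀ j ∈ Finset.Icc 1 n, α i (K j) = if i = j then 1 else 0

/-- `δ = Σ m_j α_j` is the highest root of `Δ(gC, t_ℂ)`. -/
structure IsHighestRoot (t : LieSubalgebra ℝ gC) (n : ℕ) (α : ℕ → Module.Dual ℂ gC)
    (δ : Module.Dual ℂ gC) (m : ℕ → ℕ) : Prop where
  isRoot : IsRoot gC t δ
  decomp : ∀ H ∈ cspan gC t, δ H = ∑ j ∈ Finset.Icc 1 n, (m j : ℂ) * α j H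
  highest : ∀ (b : Module.Dual ℂ gC) (k : ℕ → ℕ), IsRoot gC t b →
    (∀ H ∈ cspan gC t, b H = ∑ j ∈ Finset.Icc 1 n, (k j : ℂ) * α j H) →
    ∀ j ∈ Finset.Icc 1 n, k j ≤ m j

/-- `expAd X` is the inner automorphism `Ad(exp X) = exp (ad X)` of `gC`:
it multiplies each eigenvector of `ad X` with eigenvalue `c` by `e^c`, it is additive on
commuting arguments, and conjugation by any automorphism transports it naturally. -/
structure IsExpAd (expAd : gC → (gC ≃ₗ⁅ℂ⁆ gC)) : Prop where
  eig : ∀ (X Y : gC) (c : ℂ), ⁅X, Y⁆ = c • Y → expAd X Y = Complex.exp c • Y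
  add : ∀ X Y : gC, ⁅X, Y⁆ = 0 → expAd (X + Y) = expAd X * expAd Y
  conj : ∀ (f : gC ≃ₗ⁅ℂ⁆ gC) (X : gC), f * expAd X * f⁻¹ = expAd (f X)

/-- The group `Int(s)` of inner automorphisms generated by `exp (ad X)`, `X ∈ s`. -/
noncomputable def Inn (expAd : gC → (gC ≃ₗ⁅ℂ⁆ gC)) (s : LieSubalgebra ℝ gC) :
    Subgroup (gC ≃ₗ⁅ℂ⁆ gC) :=
  Subgroup.closure (expAd '' (s : Set gC))

/-- The automorphism `τ_H = Ad(exp π √-1 H)`. -/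
noncomputable def tau (expAd : gC → (gC ≃ₗ⁅ℂ⁆ gC)) (H : gC) : gC ≃ₗ⁅ℂ⁆ gC :=
  expAd (((Real.pi : ℂ) * Complex.I) • H)

/-- The automorphism `Ad(exp (π/2) √-1 H)`. -/
noncomputable def sigmaAd (expAd : gC → (gC ≃ₗ⁅ℂ⁆ gC)) (H : gC) : gC ≃ₗ⁅ℂ⁆ gC :=
  expAd ((((Real.pi / 2 : ℝ) : ℂ) * Complex.I) • H)

/-- The fixed point set `g^f` of an automorphism `f` inside the real form `g`. -/
def FixIn (g : LieSubalgebra ℝ gC) (f : gC ≃ₗ⁅ℂ⁆ gC) : Set gC :=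
  {x : gC | x ∈ g ∧ f x = x}

/-- Root space decomposition: `gC` is spanned by `t_ℂ` together with the root spaces. -/
def SpansByRoots (t : LieSubalgebra ℝ gC) : Prop :=
  Submodule.span ℂ ((cspan gC t : Set gC) ∪
    {X : gC | ∃ a : Module.Dual ℂ gC, IsRoot gC t a ∧ X ∈ rootSpace gC t a}) = ⊤
section Aux
set_option linter.unusedSectionVars false

variable {gC : Type} [LieRing gC] [LieAlgebra ℂ gC] [LieAlgebra ℝ gC]
  [IsScalarTower ℝ ℂ gC] [FiniteDimensional ℂ gC]

variable {g t : LieSubalgebra ℝ gC}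

lemma mem_cspan {x : gC} (hx : x ∈ t) : x ∈ cspan gC t := Submodule.subset_span hx

lemma coe_smul' (r : ℝ) (x : gC) : (r : ℂ) • x = r • x := by
  rw [← Complex.coe_algebraMap, algebraMap_smul]

lemma smul_decomp (c : ℂ) (x : gC) : c • x = c.re • x + Complex.I • (c.im • x) := by
  rw [← coe_smul' c.re, ← coe_smul' c.im, smul_smul, ← add_smul]
  congr 1
  simp [Complex.ext_iff]

lemma cspan_abelian (ht : IsMaxAbelian gC g t) :
    ∀ x ∈ cspan gC t, ∀ y ∈ cspan gC t, ⁅x, y⁆ = (0 : gC) := by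
  intro x hx
  induction hx using Submodule.span_induction with
  | mem x hx =>
    intro y hy
    induction hy using Submodule.span_induction with
    | mem y hy => exact ht.abelian _ hx _ hy
    | zero => simp
    | add a b _ _ pa pb => simp [pa, pb]
    | smul c a _ pa => simp [pa]
  | zero => intro y hy; simp
  | add a b _ _ pa pb => intro y hy; simp [pa y hy, pb y hy]
  | smul c a _ pa => intro y hy; simp [pa y hy]

lemma decomp_unique (hg : IsCompactForm gC g) {u v u' v' : gC}
    (hu : u ∈ g) (hv : v ∈ g) (hu' : u' ∈ g) (hv' : v' ∈ g)
    (h : u + Complex.I • v = u' + Complex.I • v') : u = u' ∧ v = v' := by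
  have hvv : v - v' = 0 := by
    apply hg.inj _ (g.toSubmodule.sub_mem hv hv')
    have h2 : Complex.I • (v - v') = u' - u := by
      rw [smul_sub]
      have := sub_eq_sub_iff_add_eq_add.mpr h
      linear_combination (norm := module) h
    rw [h2]
    exact g.toSubmodule.sub_mem hu' hu
  have hv2 : v = v' := by rwa [sub_eq_zero] at hvv
  subst hv2
  refine ⟨by simpa using h, rfl⟩

noncomputable def reP (hg : IsCompactForm gC g) (z : gC) : gC := (hg.spans z).choose

noncomputable def imP (hg : IsCompactForm gC g) (z : gC) : gC :=
  (hg.spans z).choose_spec.2.choose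

lemma reP_mem (hg : IsCompactForm gC g) (z : gC) : reP hg z ∈ g :=
  (hg.spans z).choose_spec.1

lemma imP_mem (hg : IsCompactForm gC g) (z : gC) : imP hg z ∈ g :=
  (hg.spans z).choose_spec.2.choose_spec.1

lemma reP_spec (hg : IsCompactForm gC g) (z : gC) :
    z = reP hg z + Complex.I • imP hg z :=
  (hg.spans z).choose_spec.2.choose_spec.2

lemma reP_eq (hg : IsCompactForm gC g) {z u v : gC} (hu : u ∈ g) (hv : v ∈ g)
    (h : z = u + Complex.I • v) : reP hg z = u ∧ imP hg z = v :=
  decomp_unique hg (reP_mem hg z) (imP_mem hg z) hu hv (by rw [← reP_spec, h])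

noncomputable def tauC (hg : IsCompactForm gC g) (z : gC) : gC :=
  reP hg z - Complex.I • imP hg z

lemma tauC_of (hg : IsCompactForm gC g) {z u v : gC} (hu : u ∈ g) (hv : v ∈ g)
    (h : z = u + Complex.I • v) : tauC hg z = u - Complex.I • v := by
  obtain ⟨h1, h2⟩ := reP_eq hg hu hv h
  rw [tauC, h1, h2]

lemma tauC_self (hg : IsCompactForm gC g) {z : gC} (hz : z ∈ g) : tauC hg z = z := by
  rw [tauC_of hg hz g.zero_mem (by simp)]; simp

lemma tauC_mem_self (hg : IsCompactForm gC g) {z : gC} (hz : tauC hg z = z) : z ∈ g := by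
  have him : imP hg z = 0 := by
    apply hg.inj _ (imP_mem hg z)
    have : Complex.I • imP hg z = 0 := by
      have h1 := reP_spec hg z
      have h2 : reP hg z - Complex.I • imP hg z = z := hz
      have h3 : Complex.I • imP hg z + Complex.I • imP hg z = 0 := by
        linear_combination (norm := module) - h1 - h2
      rw [← two_smul ℂ] at h3
      simpa using (smul_eq_zero.mp h3).resolve_left (by norm_num)
    rw [this]; exact g.zero_mem
  have := reP_spec hg z
  rw [him] at this
  simp at this
  rw [this]; exact reP_mem hg z

lemma tauC_add (hg : IsCompactForm gC g) (y z : gC) :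
    tauC hg (y + z) = tauC hg y + tauC hg z := by
  have h := tauC_of hg (g.toSubmodule.add_mem (reP_mem hg y) (reP_mem hg z))
    (g.toSubmodule.add_mem (imP_mem hg y) (imP_mem hg z))
    (show y + z = (reP hg y + reP hg z) + Complex.I • (imP hg y + imP hg z) by
      rw [smul_add]
      have h1 := reP_spec hg y
      have h2 := reP_spec hg z
      linear_combination (norm := module) h1 + h2)
  rw [h, tauC, tauC]
  module

lemma tauC_smul (hg : IsCompactForm gC g) (c : ℂ) (z : gC) :
    tauC hg (c • z) = (starRingEnd ℂ) c • tauC hg z := by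
  set u := reP hg z
  set v := imP hg z
  have hu := reP_mem hg z
  have hv := imP_mem hg z
  have hdec : c • z = (c.re • u - c.im • v) + Complex.I • (c.im • u + c.re • v) := by
    rw [reP_spec hg z]
    rw [show (c.re • u - c.im • v) + Complex.I • (c.im • u + c.re • v)
        = ((c.re : ℂ) • u - (c.im : ℂ) • v) + Complex.I • ((c.im : ℂ) • u + (c.re : ℂ) • v) by
      rw [coe_smul' c.re u, coe_smul' c.im v, coe_smul' c.im u, coe_smul' c.re v]]
    match_scalars <;> simp [Complex.ext_iff] <;> ring
  have h := tauC_of hg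
    (g.toSubmodule.sub_mem (g.toSubmodule.smul_mem c.re hu) (g.toSubmodule.smul_mem c.im hv))
    (g.toSubmodule.add_mem (g.toSubmodule.smul_mem c.im hu) (g.toSubmodule.smul_mem c.re hv))
    hdec
  rw [h, tauC]
  rw [show (c.re • u - c.im • v) - Complex.I • (c.im • u + c.re • v)
      = ((c.re : ℂ) • u - (c.im : ℂ) • v) - Complex.I • ((c.im : ℂ) • u + (c.re : ℂ) • v) by
    rw [coe_smul' c.re u, coe_smul' c.im v, coe_smul' c.im u, coe_smul' c.re v]]
  match_scalars <;> simp [Complex.ext_iff] <;> ring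

lemma tauC_ne_zero (hg : IsCompactForm gC g) {z : gC} (hz : z ≠ 0) : tauC hg z ≠ 0 := by
  intro h
  apply hz
  have him : imP hg z = 0 := by
    apply hg.inj _ (imP_mem hg z)
    have : Complex.I • imP hg z = reP hg z := by
      have : reP hg z - Complex.I • imP hg z = 0 := h
      linear_combination (norm := module) -this
    rw [this]; exact reP_mem hg z
  have hre : reP hg z = 0 := by
    have := h
    rw [tauC, him] at this
    simpa using this
  rw [reP_spec hg z, him, hre]
  simp

end Aux
section Aux2
set_option linter.unusedSectionVars false

variable {gC : Type} [LieRing gC] [LieAlgebra ℂ gC] [LieAlgebra ℝ gC]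
  [IsScalarTower ℝ ℂ gC] [FiniteDimensional ℂ gC]

variable {g t : LieSubalgebra ℝ gC}

lemma root_components (hg : IsCompactForm gC g) (ht : IsMaxAbelian gC g t)
    {b : Module.Dual ℂ gC} {X : gC} (hX : X ∈ rootSpace gC t b) {H : gC} (hH : H ∈ t) :
    ⁅H, reP hg X⁆ = (b H).re • reP hg X - (b H).im • imP hg X ∧
      ⁅H, imP hg X⁆ = (b H).im • reP hg X + (b H).re • imP hg X := by
  set u := reP hg X with hu_def
  set v := imP hg X with hv_def
  have hu := reP_mem hg X
  have hv := imP_mem hg X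
  set r := (b H).re
  set s := (b H).im
  have hbr : ⁅H, X⁆ = b H • X := hX H (mem_cspan hH)
  have hXuv : X = u + Complex.I • v := reP_spec hg X
  have h1 : ⁅H, u⁆ + Complex.I • ⁅H, v⁆ = (r • u - s • v) + Complex.I • (s • u + r • v) := by
    have h2 : ⁅H, u + Complex.I • v⁆ = b H • (u + Complex.I • v) := by
      rw [← hXuv]; exact hbr
    rw [lie_add, lie_smul] at h2
    rw [h2]
    rw [← coe_smul' r u, ← coe_smul' s v, ← coe_smul' s u, ← coe_smul' r v]
    match_scalars <;> simp [Complex.ext_iff] <;> exact ⟨rfl, rfl⟩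
  exact decomp_unique hg (g.lie_mem (ht.le hH) hu) (g.lie_mem (ht.le hH) hv)
    (g.toSubmodule.sub_mem (g.toSubmodule.smul_mem r hu) (g.toSubmodule.smul_mem s hv))
    (g.toSubmodule.add_mem (g.toSubmodule.smul_mem s hu) (g.toSubmodule.smul_mem r hv)) h1

lemma root_re_eq_zero (hg : IsCompactForm gC g) (ht : IsMaxAbelian gC g t)
    {b : Module.Dual ℂ gC} (hb : IsRoot gC t b) {H : gC} (hH : H ∈ t) : (b H).re = 0 := by
  obtain ⟨-, X, hX0, hX⟩ := hb
  obtain ⟨e1, e2⟩ := root_components hg ht hX hH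
  set u := reP hg X
  set v := imP hg X
  have hu := reP_mem hg X
  have hv := imP_mem hg X
  set r := (b H).re
  set s := (b H).im
  set H' : ↥g := ⟨H, ht.le hH⟩
  set u' : ↥g := ⟨u, hu⟩
  set v' : ↥g := ⟨v, hv⟩
  set B := killingForm ℝ ↥g with hB_def
  have e1' : ⁅H', u'⁆ = r • u' - s • v' := by
    apply Subtype.ext
    rw [LieSubalgebra.coe_bracket]
    simpa using e1
  have e2' : ⁅H', v'⁆ = s • u' + r • v' := by
    apply Subtype.ext
    rw [LieSubalgebra.coe_bracket]
    simpa using e2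
  have hB1 : B ⁅H', u'⁆ u' = 0 := by
    rw [hB_def, LieModule.traceForm_apply_lie_apply]
    simp
  have hB2 : B ⁅H', v'⁆ v' = 0 := by
    rw [hB_def, LieModule.traceForm_apply_lie_apply]
    simp
  have c1 : r * B u' u' - s * B v' u' = 0 := by
    rw [e1'] at hB1
    simpa [map_sub, map_smul, smul_eq_mul] using hB1
  have c2 : s * B u' v' + r * B v' v' = 0 := by
    rw [e2'] at hB2
    simpa [map_add, map_smul, smul_eq_mul] using hB2
  have hsym : B v' u' = B u' v' := LieModule.traceForm_comm ℝ ↥g ↥g v' u'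
  have hsum : r * (B u' u' + B v' v') = 0 := by
    rw [hsym] at c1
    linarith
  have hne : u' ≠ 0 ∨ v' ≠ 0 := by
    by_contra h
    push_neg at h
    apply hX0
    have h1 : u = 0 := congrArg Subtype.val h.1
    have h2 : v = 0 := congrArg Subtype.val h.2
    rw [reP_spec hg X]
    show u + Complex.I • v = 0
    rw [h1, h2]; simp
  have hneg : B u' u' + B v' v' < 0 := by
    have hle : ∀ x : ↥g, B x x ≤ 0 := by
      intro x
      by_cases hx : x = 0
      · simp [hx]
      · exact le_of_lt (hg.negdef x hx)
    rcases hne with h | h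
    · have := hg.negdef u' h; have := hle v'; linarith
    · have := hg.negdef v' h; have := hle u'; linarith
  rcases mul_eq_zero.mp hsum with h | h
  · exact h
  · exact absurd h (ne_of_lt hneg)

lemma tauC_rootSpace (hg : IsCompactForm gC g) (ht : IsMaxAbelian gC g t)
    {b : Module.Dual ℂ gC} (hb : IsRoot gC t b) {X : gC} (hX : X ∈ rootSpace gC t b) :
    tauC hg X ∈ rootSpace gC t (-b) := by
  intro H hH
  induction hH using Submodule.span_induction with
  | mem H hH =>
    obtain ⟨e1, e2⟩ := root_components hg ht hX hH
    have hr : (b H).re = 0 := root_re_eq_zero hg ht hb hH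
    set u := reP hg X
    set v := imP hg X
    set s := (b H).im with hs_def
    have hbH : b H = (s : ℂ) * Complex.I := by
      rw [← Complex.re_add_im (b H), hr]; simp [hs_def]
    rw [hr] at e1 e2
    show ⁅H, u - Complex.I • v⁆ = (-b) H • (u - Complex.I • v)
    rw [lie_sub, lie_smul, e1, e2, LinearMap.neg_apply,
      ← coe_smul' s u, ← coe_smul' s v]
    match_scalars
    case _ => simp only [hbH]; push_cast; ring
    case _ => simp only [hbH]; linear_combination (-(s:ℂ)) * Complex.I_sq
  | zero => simp
  | add x y hx hy px py => rw [add_lie, px, py, map_add, add_smul]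
  | smul c x hx px => rw [smul_lie, px, map_smul, smul_eq_mul, smul_smul]

lemma isRoot_neg (hg : IsCompactForm gC g) (ht : IsMaxAbelian gC g t)
    {b : Module.Dual ℂ gC} (hb : IsRoot gC t b) : IsRoot gC t (-b) := by
  obtain ⟨⟨H, hH, hne⟩, X, hX0, hX⟩ := hb
  exact ⟨⟨H, hH, by simp [hne]⟩, tauC hg X, tauC_ne_zero hg hX0,
    tauC_rootSpace hg ht ⟨⟨H, hH, hne⟩, X, hX0, hX⟩ hX⟩

end Aux2
section Aux3
set_option linter.unusedSectionVars false

variable {gC : Type} [LieRing gC] [LieAlgebra ℂ gC] [LieAlgebra ℝ gC]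
  [IsScalarTower ℝ ℂ gC] [FiniteDimensional ℂ gC]

variable {g t : LieSubalgebra ℝ gC}

lemma sum_eval {n : ℕ} {α : ℕ → Module.Dual ℂ gC} {K : ℕ → gC}
    (hsys : IsSimpleSystem gC t n α K) {j0 : ℕ} (hj0 : j0 ∈ Finset.Icc 1 n) (k : ℕ → ℕ) :
    ∑ j ∈ Finset.Icc 1 n, (k j : ℂ) * α j (K j0) = k j0 := by
  rw [Finset.sum_congr rfl (fun j hj => by rw [hsys.K_dual j hj j0 hj0])]
  simp only [mul_ite, mul_one, mul_zero]
  rw [Finset.sum_ite_eq' (Finset.Icc 1 n) j0 (fun j => (k j : ℂ))]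
  simp [hj0]

lemma root_values (hg : IsCompactForm gC g) (ht : IsMaxAbelian gC g t)
    {n : ℕ} {α : ℕ → Module.Dual ℂ gC} {K : ℕ → gC}
    (hsys : IsSimpleSystem gC t n α K)
    {δ : Module.Dual ℂ gC} {m : ℕ → ℕ} (hδ : IsHighestRoot gC t n α δ m)
    {p q : ℕ} (hp : p ∈ Finset.Icc 1 n) (hq : q ∈ Finset.Icc 1 n)
    (hmp : m p = 1) (hmq : m q = 1)
    {b : Module.Dual ℂ gC} (hb : IsRoot gC t b) :
    ∃ a c : ℤ, b (K p) = a ∧ b (K q) = c ∧ a.natAbs ≤ 1 ∧ c.natAbs ≤ 1 ∧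
      ((0 ≤ a ∧ 0 ≤ c) ∨ (a ≤ 0 ∧ c ≤ 0)) := by
  rcases hsys.decomp b hb with ⟨k, hk⟩ | ⟨k, hk⟩
  · have hbp : b (K p) = k p := by rw [hk (K p) (hsys.K_mem p hp), sum_eval hsys hp k]
    have hbq : b (K q) = k q := by rw [hk (K q) (hsys.K_mem q hq), sum_eval hsys hq k]
    have h1 := hδ.highest b k hb hk p hp
    have h2 := hδ.highest b k hb hk q hq
    refine ⟨k p, k q, by push_cast [hbp]; ring, by push_cast [hbq]; ring, ?_, ?_, Or.inl ⟨by positivity, by positivity⟩⟩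
    · simp [Int.natAbs_natCast]; omega
    · simp [Int.natAbs_natCast]; omega
  · have hnb := isRoot_neg hg ht hb
    have hk' : ∀ H ∈ cspan gC t, (-b) H = ∑ j ∈ Finset.Icc 1 n, (k j : ℂ) * α j H := by
      intro H hH
      rw [LinearMap.neg_apply, hk H hH, neg_neg]
    have h1 := hδ.highest (-b) k hnb hk' p hp
    have h2 := hδ.highest (-b) k hnb hk' q hq
    have hbp : b (K p) = -(k p : ℂ) := by
      rw [hk (K p) (hsys.K_mem p hp), sum_eval hsys hp k]
    have hbq : b (K q) = -(k q : ℂ) := by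
      rw [hk (K q) (hsys.K_mem q hq), sum_eval hsys hq k]
    refine ⟨-(k p : ℤ), -(k q : ℤ), by push_cast [hbp]; ring, by push_cast [hbq]; ring, ?_, ?_,
      Or.inr ⟨by omega, by omega⟩⟩
    · simp [Int.natAbs_neg]; omega
    · simp [Int.natAbs_neg]; omega

lemma exp_pi_div_two_eq_one_iff (M : ℤ) :
    Complex.exp ((((Real.pi / 2 : ℝ) : ℂ) * Complex.I) * M) = 1 ↔ (4 : ℤ) ∣ M := by
  rw [Complex.exp_eq_one_iff]
  constructor
  · rintro ⟨nn, h⟩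
    refine ⟨nn, ?_⟩
    have him := congrArg Complex.im h
    simp [Complex.mul_im, Complex.mul_re] at him
    have hpi := Real.pi_ne_zero
    have : (M : ℝ) = 4 * nn := by
      field_simp at him
      have h2 : Real.pi * (M : ℝ) = Real.pi * (4 * nn) := by rw [him]; ring
      exact mul_left_cancel₀ hpi h2
    exact_mod_cast this
  · rintro ⟨nn, rfl⟩
    exact ⟨nn, by push_cast; ring⟩

lemma exp_two_pi_div_three_eq_one_iff (M : ℤ) :
    Complex.exp ((((2 * Real.pi / 3 : ℝ) : ℂ) * Complex.I) * M) = 1 ↔ (3 : ℤ) ∣ M := by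
  rw [Complex.exp_eq_one_iff]
  constructor
  · rintro ⟨nn, h⟩
    refine ⟨nn, ?_⟩
    have him := congrArg Complex.im h
    simp [Complex.mul_im, Complex.mul_re] at him
    have hpi := Real.pi_ne_zero
    have : (M : ℝ) = 3 * nn := by
      field_simp at him
      have h2 : Real.pi * (M : ℝ) = Real.pi * (3 * nn) := by rw [him]
      exact mul_left_cancel₀ hpi h2
    exact_mod_cast this
  · rintro ⟨nn, rfl⟩
    exact ⟨nn, by push_cast; ring⟩

end Aux3
section Aux4
set_option linter.unusedSectionVars false

variable {gC : Type} [LieRing gC] [LieAlgebra ℂ gC] [LieAlgebra ℝ gC]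
  [IsScalarTower ℝ ℂ gC] [FiniteDimensional ℂ gC]

variable {g t : LieSubalgebra ℝ gC}

/-- The span of `t_ℂ` and the root spaces of roots satisfying `Good`. -/
def ESpan (t : LieSubalgebra ℝ gC) (Good : Module.Dual ℂ gC → Prop) : Submodule ℂ gC :=
  Submodule.span ℂ ((cspan gC t : Set gC) ∪
    {X : gC | ∃ b : Module.Dual ℂ gC, IsRoot gC t b ∧ X ∈ rootSpace gC t b ∧ Good b})

lemma fix_iff_mem_ESpan (hspan : SpansByRoots gC t) (f : gC ≃ₗ⁅ℂ⁆ gC)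
    (N : ℕ) (hN : 0 < N) (Good : Module.Dual ℂ gC → Prop)
    (hfixt : ∀ H ∈ cspan gC t, f H = H)
    (hroot : ∀ (b : Module.Dual ℂ gC) (X : gC), IsRoot gC t b → X ∈ rootSpace gC t b →
      ∃ lam : ℂ, f X = lam • X ∧ lam ^ N = 1 ∧ (lam = 1 ↔ Good b)) :
    ∀ x : gC, f x = x ↔ x ∈ ESpan t Good := by
  set L : Module.End ℂ gC := (f.toLinearEquiv : gC →ₗ[ℂ] gC) with hL_def
  have hLapp : ∀ y : gC, L y = f y := fun y => rfl
  set P : Module.End ℂ gC := (N : ℂ)⁻¹ • ∑ j ∈ Finset.range N, L ^ j with hP_def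
  have hNne : (N : ℂ) ≠ 0 := by exact_mod_cast hN.ne'
  -- P maps everything into ESpan
  have hPmem : ∀ y : gC, P y ∈ ESpan t Good := by
    intro y
    have hy : y ∈ Submodule.span ℂ ((cspan gC t : Set gC) ∪
        {X : gC | ∃ a : Module.Dual ℂ gC, IsRoot gC t a ∧ X ∈ rootSpace gC t a}) := by
      have h : Submodule.span ℂ ((cspan gC t : Set gC) ∪
        {X : gC | ∃ a : Module.Dual ℂ gC, IsRoot gC t a ∧ X ∈ rootSpace gC t a}) = ⊤ := hspan
      rw [h]; trivial
    induction hy using Submodule.span_induction with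
    | mem y hy =>
      rcases hy with hy | ⟨b, hb, hyb⟩
      · -- y ∈ cspan : fixed by f, hence by L^j ; P y = y
        have hLj : ∀ j : ℕ, (L ^ j) y = y := by
          intro j; induction j with
          | zero => simp
          | succ j ih => rw [pow_succ, Module.End.mul_apply, hLapp, hfixt y hy, ih]
        have hPy : P y = y := by
          rw [hP_def, LinearMap.smul_apply, LinearMap.sum_apply]
          rw [Finset.sum_congr rfl fun j _ => hLj j, Finset.sum_const, Finset.card_range,
            ← Nat.cast_smul_eq_nsmul ℂ, smul_smul, inv_mul_cancel₀ hNne, one_smul]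
        rw [hPy]
        exact Submodule.subset_span (Or.inl hy)
      · obtain ⟨lam, hflam, hlamN, hgood⟩ := hroot b y hb hyb
        have hLj : ∀ j : ℕ, (L ^ j) y = lam ^ j • y := by
          intro j; induction j with
          | zero => simp
          | succ j ih => rw [pow_succ, Module.End.mul_apply, hLapp, hflam, map_smul, ih,
              smul_smul, pow_succ, mul_comm]
        have hPy : P y = ((N : ℂ)⁻¹ * ∑ j ∈ Finset.range N, lam ^ j) • y := by
          rw [hP_def, LinearMap.smul_apply, LinearMap.sum_apply]
          rw [Finset.sum_congr rfl fun j _ => hLj j, ← Finset.sum_smul, smul_smul]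
        by_cases hl : lam = 1
        · have : P y = y := by
            rw [hPy, hl]
            simp [inv_mul_cancel₀ hNne]
          rw [this]
          exact Submodule.subset_span (Or.inr ⟨b, hb, hyb, hgood.mp hl⟩)
        · have : P y = 0 := by
            rw [hPy, geom_sum_eq hl, hlamN, sub_self, zero_div, mul_zero, zero_smul]
          rw [this]
          exact Submodule.zero_mem _
    | zero => rw [map_zero]; exact Submodule.zero_mem _
    | add a b _ _ pa pb => rw [map_add]; exact Submodule.add_mem _ pa pb
    | smul c a _ pa => rw [map_smul]; exact Submodule.smul_mem _ c pa
  intro x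
  constructor
  · intro hfx
    have hLj : ∀ j : ℕ, (L ^ j) x = x := by
      intro j; induction j with
      | zero => simp
      | succ j ih => rw [pow_succ, Module.End.mul_apply, hLapp, hfx, ih]
    have hPx : P x = x := by
      rw [hP_def, LinearMap.smul_apply, LinearMap.sum_apply]
      rw [Finset.sum_congr rfl fun j _ => hLj j, Finset.sum_const, Finset.card_range,
        ← Nat.cast_smul_eq_nsmul ℂ, smul_smul, inv_mul_cancel₀ hNne, one_smul]
    rw [← hPx]
    exact hPmem x
  · intro hx
    induction hx using Submodule.span_induction with
    | mem y hy =>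
      rcases hy with hy | ⟨b, hb, hyb, hgb⟩
      · exact hfixt y hy
      · obtain ⟨lam, hflam, hlamN, hgood⟩ := hroot b y hb hyb
        rw [hflam, hgood.mpr hgb, one_smul]
    | zero => rw [← hLapp, map_zero]
    | add a b _ _ pa pb => rw [← hLapp, map_add, hLapp, hLapp, pa, pb]
    | smul c a _ pa => rw [← hLapp, map_smul, hLapp, pa]

end Aux4
section Aux5
set_option linter.unusedSectionVars false

variable {gC : Type} [LieRing gC] [LieAlgebra ℂ gC] [LieAlgebra ℝ gC]
  [IsScalarTower ℝ ℂ gC] [FiniteDimensional ℂ gC]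

variable {g t : LieSubalgebra ℝ gC}

lemma lieEquiv_map_add (f : gC ≃ₗ⁅ℂ⁆ gC) (x y : gC) : f (x + y) = f x + f y :=
  f.toLinearEquiv.map_add x y

lemma lieEquiv_map_smul (f : gC ≃ₗ⁅ℂ⁆ gC) (c : ℂ) (x : gC) : f (c • x) = c • f x :=
  f.toLinearEquiv.map_smul c x

lemma lieEquiv_map_zero (f : gC ≃ₗ⁅ℂ⁆ gC) : f (0 : gC) = 0 :=
  f.toLinearEquiv.map_zero

lemma expAd_fix_cspan (ht : IsMaxAbelian gC g t) {expAd : gC → (gC ≃ₗ⁅ℂ⁆ gC)}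
    (hexp : IsExpAd gC expAd) {Z : gC} (hZ : Z ∈ cspan gC t)
    {H : gC} (hH : H ∈ cspan gC t) : expAd Z H = H := by
  have h0 : ⁅Z, H⁆ = (0 : ℂ) • H := by rw [cspan_abelian ht _ hZ _ hH, zero_smul]
  rw [hexp.eig _ _ _ h0, Complex.exp_zero, one_smul]

lemma expAd_root {expAd : gC → (gC ≃ₗ⁅ℂ⁆ gC)} (hexp : IsExpAd gC expAd)
    {Z : gC} (hZ : Z ∈ cspan gC t) {b : Module.Dual ℂ gC} {X : gC}
    (hX : X ∈ rootSpace gC t b) : expAd Z X = Complex.exp (b Z) • X :=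
  hexp.eig _ _ _ (hX Z hZ)

variable {expAd : gC → (gC ≃ₗ⁅ℂ⁆ gC)} {n : ℕ} {α : ℕ → Module.Dual ℂ gC} {K : ℕ → gC}
  {δ : Module.Dual ℂ gC} {m : ℕ → ℕ} {p q : ℕ}

lemma sigma_fix_iff (hg : IsCompactForm gC g) (ht : IsMaxAbelian gC g t)
    (hexp : IsExpAd gC expAd) (hspan : SpansByRoots gC t)
    (hsys : IsSimpleSystem gC t n α K) (hδ : IsHighestRoot gC t n α δ m)
    (hp : p ∈ Finset.Icc 1 n) (hq : q ∈ Finset.Icc 1 n)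
    (hmp : m p = 1) (hmq : m q = 1) :
    ∀ x : gC, sigmaAd gC expAd ((2 : ℂ) • K p + K q) x = x ↔
      x ∈ ESpan t (fun b => b (K p) = 0 ∧ b (K q) = 0) := by
  have hZ : (((Real.pi / 2 : ℝ) : ℂ) * Complex.I) • ((2 : ℂ) • K p + K q) ∈ cspan gC t :=
    Submodule.smul_mem _ _ (Submodule.add_mem _
      (Submodule.smul_mem _ _ (hsys.K_mem p hp)) (hsys.K_mem q hq))
  apply fix_iff_mem_ESpan hspan _ 4 (by norm_num)
  · intro H hH
    simp only [sigmaAd]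
    exact expAd_fix_cspan ht hexp hZ hH
  · intro b X hb hX
    obtain ⟨a, c, hKp, hKq, ha, hc, hsign⟩ := root_values hg ht hsys hδ hp hq hmp hmq hb
    refine ⟨Complex.exp ((((Real.pi / 2 : ℝ) : ℂ) * Complex.I) * ((2 * a + c : ℤ) : ℂ)),
      ?_, ?_, ?_⟩
    · simp only [sigmaAd]
      rw [expAd_root hexp hZ hX]
      congr 2
      rw [map_smul, map_add, map_smul, hKp, hKq]
      simp only [smul_eq_mul]
      push_cast
      ring
    · rw [← Complex.exp_nat_mul, Complex.exp_eq_one_iff]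
      exact ⟨2 * a + c, by push_cast; ring⟩
    · rw [exp_pi_div_two_eq_one_iff, hKp, hKq]
      constructor
      · intro h4
        have h0 : a = 0 ∧ c = 0 := by omega
        simp [h0.1, h0.2]
      · rintro ⟨h1, h2⟩
        have ha0 : a = 0 := by exact_mod_cast h1
        have hc0 : c = 0 := by exact_mod_cast h2
        simp [ha0, hc0]

lemma theta_fix_iff (hg : IsCompactForm gC g) (ht : IsMaxAbelian gC g t)
    (hexp : IsExpAd gC expAd) (hspan : SpansByRoots gC t)
    (hsys : IsSimpleSystem gC t n α K) (hδ : IsHighestRoot gC t n α δ m)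
    (hp : p ∈ Finset.Icc 1 n) (hq : q ∈ Finset.Icc 1 n)
    (hmp : m p = 1) (hmq : m q = 1) :
    ∀ x : gC, expAd ((((2 * Real.pi / 3 : ℝ) : ℂ) * Complex.I) • (K p + K q)) x = x ↔
      x ∈ ESpan t (fun b => b (K p) = 0 ∧ b (K q) = 0) := by
  have hZ : (((2 * Real.pi / 3 : ℝ) : ℂ) * Complex.I) • (K p + K q) ∈ cspan gC t :=
    Submodule.smul_mem _ _ (Submodule.add_mem _ (hsys.K_mem p hp) (hsys.K_mem q hq))
  apply fix_iff_mem_ESpan hspan _ 3 (by norm_num)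
  · intro H hH
    exact expAd_fix_cspan ht hexp hZ hH
  · intro b X hb hX
    obtain ⟨a, c, hKp, hKq, ha, hc, hsign⟩ := root_values hg ht hsys hδ hp hq hmp hmq hb
    refine ⟨Complex.exp ((((2 * Real.pi / 3 : ℝ) : ℂ) * Complex.I) * ((a + c : ℤ) : ℂ)),
      ?_, ?_, ?_⟩
    · rw [expAd_root hexp hZ hX]
      congr 2
      rw [map_smul, map_add, hKp, hKq]
      simp only [smul_eq_mul]
      push_cast
      ring
    · rw [← Complex.exp_nat_mul, Complex.exp_eq_one_iff]
      exact ⟨a + c, by push_cast; ring⟩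
    · rw [exp_two_pi_div_three_eq_one_iff, hKp, hKq]
      constructor
      · intro h3
        have h0 : a = 0 ∧ c = 0 := by omega
        simp [h0.1, h0.2]
      · rintro ⟨h1, h2⟩
        have ha0 : a = 0 := by exact_mod_cast h1
        have hc0 : c = 0 := by exact_mod_cast h2
        simp [ha0, hc0]

end Aux5
section Aux6
set_option linter.unusedSectionVars false

variable {gC : Type} [LieRing gC] [LieAlgebra ℂ gC] [LieAlgebra ℝ gC]
  [IsScalarTower ℝ ℂ gC] [FiniteDimensional ℂ gC]

variable {g t : LieSubalgebra ℝ gC}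
variable {expAd : gC → (gC ≃ₗ⁅ℂ⁆ gC)} {n : ℕ} {α : ℕ → Module.Dual ℂ gC} {K : ℕ → gC}
  {δ : Module.Dual ℂ gC} {m : ℕ → ℕ} {p q : ℕ}

lemma theta_cube (hg : IsCompactForm gC g) (ht : IsMaxAbelian gC g t)
    (hexp : IsExpAd gC expAd) (hspan : SpansByRoots gC t)
    (hsys : IsSimpleSystem gC t n α K) (hδ : IsHighestRoot gC t n α δ m)
    (hp : p ∈ Finset.Icc 1 n) (hq : q ∈ Finset.Icc 1 n)
    (hmp : m p = 1) (hmq : m q = 1) :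
    (expAd ((((2 * Real.pi / 3 : ℝ) : ℂ) * Complex.I) • (K p + K q))) ^ 3 = 1 := by
  set W := (((2 * Real.pi / 3 : ℝ) : ℂ) * Complex.I) • (K p + K q) with hW_def
  have hWt : W ∈ cspan gC t :=
    Submodule.smul_mem _ _ (Submodule.add_mem _ (hsys.K_mem p hp) (hsys.K_mem q hq))
  have h1 : expAd W ^ 3 = expAd W * (expAd W * expAd W) := by
    rw [pow_succ', pow_succ', pow_one]
  have h2 : expAd W * expAd W = expAd (W + W) := (hexp.add W W (by simp)).symm
  have h3 : expAd W * expAd (W + W) = expAd (W + (W + W)) :=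
    (hexp.add W (W + W) (by simp)).symm
  rw [h1, h2, h3]
  have hW3 : W + (W + W) ∈ cspan gC t :=
    Submodule.add_mem _ hWt (Submodule.add_mem _ hWt hWt)
  apply LieEquiv.ext
  intro x
  show expAd (W + (W + W)) x = LieEquiv.refl x
  rw [LieEquiv.refl_apply]
  have hx : x ∈ Submodule.span ℂ ((cspan gC t : Set gC) ∪
      {X : gC | ∃ a : Module.Dual ℂ gC, IsRoot gC t a ∧ X ∈ rootSpace gC t a}) := by
    have h : Submodule.span ℂ ((cspan gC t : Set gC) ∪
      {X : gC | ∃ a : Module.Dual ℂ gC, IsRoot gC t a ∧ X ∈ rootSpace gC t a}) = ⊤ := hspan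
    rw [h]; trivial
  induction hx using Submodule.span_induction with
  | mem y hy =>
    rcases hy with hy | ⟨b, hb, hyb⟩
    · exact expAd_fix_cspan ht hexp hW3 hy
    · obtain ⟨a, c, hKp, hKq, ha, hc, hsign⟩ := root_values hg ht hsys hδ hp hq hmp hmq hb
      rw [expAd_root hexp hW3 hyb]
      have hval : b (W + (W + W)) = ((a + c : ℤ) : ℂ) * (2 * (Real.pi : ℂ) * Complex.I) := by
        simp only [hW_def, map_add, map_smul, hKp, hKq, smul_eq_mul]
        push_cast
        ring
      rw [hval, Complex.exp_eq_one_iff.mpr ⟨a + c, rfl⟩, one_smul]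
  | zero => rw [lieEquiv_map_zero]
  | add u v _ _ pu pv => rw [lieEquiv_map_add, pu, pv]
  | smul cc u _ pu => rw [lieEquiv_map_smul, pu]

lemma theta_ne_one (hg : IsCompactForm gC g) (ht : IsMaxAbelian gC g t)
    (hexp : IsExpAd gC expAd) (hsys : IsSimpleSystem gC t n α K)
    (hδ : IsHighestRoot gC t n α δ m)
    (hp : p ∈ Finset.Icc 1 n) (hq : q ∈ Finset.Icc 1 n)
    (hmp : m p = 1) (hmq : m q = 1) :
    (expAd ((((2 * Real.pi / 3 : ℝ) : ℂ) * Complex.I) • (K p + K q))) ≠ 1 := by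
  set W := (((2 * Real.pi / 3 : ℝ) : ℂ) * Complex.I) • (K p + K q) with hW_def
  have hWt : W ∈ cspan gC t :=
    Submodule.smul_mem _ _ (Submodule.add_mem _ (hsys.K_mem p hp) (hsys.K_mem q hq))
  obtain ⟨-, X, hX0, hX⟩ := hδ.isRoot
  have hθX : expAd W X = Complex.exp (δ W) • X := expAd_root hexp hWt hX
  have hδp : δ (K p) = 1 := by
    rw [hδ.decomp (K p) (hsys.K_mem p hp), sum_eval hsys hp m, hmp]
    norm_num
  have hδq : δ (K q) = 1 := by
    rw [hδ.decomp (K q) (hsys.K_mem q hq), sum_eval hsys hq m, hmq]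
    norm_num
  have hval : δ W = (((2 * Real.pi / 3 : ℝ) : ℂ) * Complex.I) * ((2 : ℤ) : ℂ) := by
    rw [hW_def, map_smul, map_add, hδp, hδq]
    simp only [smul_eq_mul]
    push_cast
    ring
  intro h
  have hXfix : Complex.exp (δ W) • X = X := by
    rw [← hθX, h]
    rfl
  have hdvd : ¬ ((3 : ℤ) ∣ (2 : ℤ)) := by omega
  have hne : Complex.exp ((((2 * Real.pi / 3 : ℝ) : ℂ) * Complex.I) * ((2 : ℤ) : ℂ)) ≠ 1 :=
    fun h => hdvd ((exp_two_pi_div_three_eq_one_iff 2).mp h)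
  apply hne
  rw [hval] at hXfix
  have h2 : (Complex.exp ((((2 * Real.pi / 3 : ℝ) : ℂ) * Complex.I) * ((2 : ℤ) : ℂ)) - 1) • X
      = 0 := by
    rw [sub_smul, one_smul, hXfix, sub_self]
  rcases smul_eq_zero.mp h2 with h3 | h3
  · rwa [sub_eq_zero] at h3
  · exact absurd h3 hX0

lemma tauC_cspan (hg : IsCompactForm gC g) (ht : IsMaxAbelian gC g t) :
    ∀ H ∈ cspan gC t, tauC hg H ∈ cspan gC t := by
  intro H hH
  induction hH using Submodule.span_induction with
  | mem y hy => rw [tauC_self hg (ht.le hy)]; exact mem_cspan hy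
  | zero => rw [tauC_self hg g.zero_mem]; exact Submodule.zero_mem _
  | add u v _ _ pu pv => rw [tauC_add]; exact Submodule.add_mem _ pu pv
  | smul c u _ pu => rw [tauC_smul]; exact Submodule.smul_mem _ _ pu

lemma theta_comm_tau (hg : IsCompactForm gC g) (ht : IsMaxAbelian gC g t)
    (hexp : IsExpAd gC expAd) (hspan : SpansByRoots gC t)
    (hsys : IsSimpleSystem gC t n α K) (hδ : IsHighestRoot gC t n α δ m)
    (hp : p ∈ Finset.Icc 1 n) (hq : q ∈ Finset.Icc 1 n)
    (hmp : m p = 1) (hmq : m q = 1) :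
    ∀ x : gC, tauC hg (expAd ((((2 * Real.pi / 3 : ℝ) : ℂ) * Complex.I) • (K p + K q)) x)
      = expAd ((((2 * Real.pi / 3 : ℝ) : ℂ) * Complex.I) • (K p + K q)) (tauC hg x) := by
  set W := (((2 * Real.pi / 3 : ℝ) : ℂ) * Complex.I) • (K p + K q) with hW_def
  have hWt : W ∈ cspan gC t :=
    Submodule.smul_mem _ _ (Submodule.add_mem _ (hsys.K_mem p hp) (hsys.K_mem q hq))
  intro x
  have hx : x ∈ Submodule.span ℂ ((cspan gC t : Set gC) ∪
      {X : gC | ∃ a : Module.Dual ℂ gC, IsRoot gC t a ∧ X ∈ rootSpace gC t a}) := by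
    have h : Submodule.span ℂ ((cspan gC t : Set gC) ∪
      {X : gC | ∃ a : Module.Dual ℂ gC, IsRoot gC t a ∧ X ∈ rootSpace gC t a}) = ⊤ := hspan
    rw [h]; trivial
  induction hx using Submodule.span_induction with
  | mem y hy =>
    rcases hy with hy | ⟨b, hb, hyb⟩
    · rw [expAd_fix_cspan ht hexp hWt hy,
        expAd_fix_cspan ht hexp hWt (tauC_cspan hg ht y hy)]
    · obtain ⟨a, c, hKp, hKq, ha, hc, hsign⟩ := root_values hg ht hsys hδ hp hq hmp hmq hb
      have hτ : tauC hg y ∈ rootSpace gC t (-b) := tauC_rootSpace hg ht hb hyb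
      rw [expAd_root hexp hWt hyb, tauC_smul, expAd_root hexp hWt hτ]
      congr 1
      rw [← Complex.exp_conj]
      congr 1
      have hbW : b W = (((2 * Real.pi / 3 : ℝ) : ℂ) * Complex.I) * ((a + c : ℤ) : ℂ) := by
        rw [hW_def, map_smul, map_add, hKp, hKq]
        simp only [smul_eq_mul]
        push_cast
        ring
      rw [LinearMap.neg_apply, hbW]
      simp only [map_mul, Complex.conj_ofReal, Complex.conj_I, map_intCast]
      ring
  | zero => rw [lieEquiv_map_zero, tauC_self hg g.zero_mem, lieEquiv_map_zero]
  | add u v _ _ pu pv => rw [lieEquiv_map_add, tauC_add, pu, pv, tauC_add, lieEquiv_map_add]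
  | smul c u _ pu => rw [lieEquiv_map_smul, tauC_smul, pu, tauC_smul, lieEquiv_map_smul]

end Aux6

/-- Remark 2.2 (1), second part.  Let `g` be a compact simple Lie algebra,
`t` a maximal abelian subalgebra, `δ = Σ m_j α_j` the highest root and `K i` the dual basis
of `t_ℂ`.  Suppose `m p = m q = 1` and `σ = Ad(exp (π/2) √-1 (2 K p + K q))`.  Then
`g^σ = g^θ` for `θ = Ad(exp (2π/3) √-1 (K p + K q))`; consequently, since `θ` has order
`3`, `(g, g^σ)` is a 3-symmetric pair. -/
theorem stmt_6
    (gC : Type) [LieRing gC] [LieAlgebra ℂ gC] [LieAlgebra ℝ gC]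
    [IsScalarTower ℝ ℂ gC] [FiniteDimensional ℂ gC]
    [LieAlgebra.IsSimple ℂ gC]
    (g t : LieSubalgebra ℝ gC)
    (hg : IsCompactForm gC g) (ht : IsMaxAbelian gC g t)
    (expAd : gC → (gC ≃ₗ⁅ℂ⁆ gC)) (hexp : IsExpAd gC expAd)
    (hspan : SpansByRoots gC t)
    (n : ℕ) (α : ℕ → Module.Dual ℂ gC) (K : ℕ → gC)
    (hsys : IsSimpleSystem gC t n α K)
    (δ : Module.Dual ℂ gC) (m : ℕ → ℕ) (hδ : IsHighestRoot gC t n α δ m)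
    (p q : ℕ) (hp : p ∈ Finset.Icc 1 n) (hq : q ∈ Finset.Icc 1 n) (hpq : p ≠ q)
    (hmp : m p = 1) (hmq : m q = 1) :
    FixIn gC g (sigmaAd gC expAd ((2 : ℂ) • K p + K q)) =
      FixIn gC g (expAd ((((2 * Real.pi / 3 : ℝ) : ℂ) * Complex.I) • (K p + K q))) ∧
    (expAd ((((2 * Real.pi / 3 : ℝ) : ℂ) * Complex.I) • (K p + K q))) ^ 3 = 1 ∧
    (expAd ((((2 * Real.pi / 3 : ℝ) : ℂ) * Complex.I) • (K p + K q))) ≠ 1 ∧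
    ∃ θ : gC ≃ₗ⁅ℂ⁆ gC, θ ^ 3 = 1 ∧ θ ≠ 1 ∧ (∀ x ∈ g, θ x ∈ g) ∧
      FixIn gC g (sigmaAd gC expAd ((2 : ℂ) • K p + K q)) = FixIn gC g θ := by
  have hσ := sigma_fix_iff hg ht hexp hspan hsys hδ hp hq hmp hmq
  have hθ := theta_fix_iff hg ht hexp hspan hsys hδ hp hq hmp hmq
  have hfix : FixIn gC g (sigmaAd gC expAd ((2 : ℂ) • K p + K q)) =
      FixIn gC g (expAd ((((2 * Real.pi / 3 : ℝ) : ℂ) * Complex.I) • (K p + K q))) := by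
    ext x
    simp only [FixIn, Set.mem_setOf_eq]
    constructor
    · rintro ⟨h1, h2⟩; exact ⟨h1, (hθ x).mpr ((hσ x).mp h2)⟩
    · rintro ⟨h1, h2⟩; exact ⟨h1, (hσ x).mpr ((hθ x).mp h2)⟩
  exact ⟨hfix, theta_cube hg ht hexp hspan hsys hδ hp hq hmp hmq,
    theta_ne_one hg ht hexp hsys hδ hp hq hmp hmq,
    expAd ((((2 * Real.pi / 3 : ℝ) : ℂ) * Complex.I) • (K p + K q)),
    theta_cube hg ht hexp hspan hsys hδ hp hq hmp hmq,
    theta_ne_one hg ht hexp hsys hδ hp hq hmp hmq,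
    fun x hx => tauC_mem_self hg (by
      rw [theta_comm_tau hg ht hexp hspan hsys hδ hp hq hmp hmq, tauC_self hg hx]),
    hfix⟩

end Paper
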